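/- Let m, n ≥ 4 be distinct even integers and let G_{m,n} be the subgroup of SL(2,ℝ) generated by A = [[1, 2cos(π/m) + 2cos(π/n)], [0, 1]] and B = [[2cos(π/m), 1], [−1, 0]]. Suppose α is a nonzero real number that is a parabolic fixed point of G_{m,n}, and let T = [[1, 0], [0, α]] ∈ GL(2,ℝ) (whose Möbius action is z ↦ z/α). Then each of 0, 1, and ∞ is a parabolic fixed point of the conjugate group T·G_{m,n}·T^{−1}, and T·G_{m,n}·T^{−1} contains a hyperbolic element whose Möbius fixed points are 1/α and −1/α, both of which lie in the subfield ℚ(cos(π/m), cos(π/n)) of ℝ. -/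

import Mathlib

open Real Matrix

/-- A matrix in SL(2,ℝ) is parabolic if it is not ±I and has trace of absolute value 2. -/
def IsParabolicMat (M : Matrix (Fin 2) (Fin 2) ℝ) : Prop :=
  M ≠ 1 ∧ M ≠ -1 ∧ |Matrix.trace M| = 2

/-- The Möbius action of `M` fixes the real number `z`. -/
def MoebiusFixes (M : Matrix (Fin 2) (Fin 2) ℝ) (z : ℝ) : Prop :=
  M 0 0 * z + M 0 1 = (M 1 0 * z + M 1 1) * z

/-- The Möbius action of `M` fixes the point ∞. -/
def MoebiusFixesInf (M : Matrix (Fin 2) (Fin 2) ℝ) : Prop :=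
  M 1 0 = 0

/-- The conjugate `T·G·T⁻¹` of the group generated by `A` and `B` by the matrix
`T = !![1, 0; 0, α]`, as a set of 2×2 real matrices. -/
def conjSet (A B : Matrix.SpecialLinearGroup (Fin 2) ℝ) (α : ℝ) :
    Set (Matrix (Fin 2) (Fin 2) ℝ) :=
  {N | ∃ M ∈ Subgroup.closure ({A, B} : Set (Matrix.SpecialLinearGroup (Fin 2) ℝ)),
    N = !![(1 : ℝ), 0; 0, α] * (M : Matrix (Fin 2) (Fin 2) ℝ) * !![(1 : ℝ), 0; 0, α⁻¹]}

/- ### Auxiliary lemmas -/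

lemma conj_mat (α : ℝ) (P : Matrix (Fin 2) (Fin 2) ℝ) :
    !![(1 : ℝ), 0; 0, α] * P * !![(1 : ℝ), 0; 0, α⁻¹] =
      !![P 0 0, P 0 1 * α⁻¹; α * P 1 0, α * P 1 1 * α⁻¹] := by
  rw [Matrix.eta_fin_two P, Matrix.mul_fin_two, Matrix.mul_fin_two]
  ext i j
  fin_cases i <;> fin_cases j <;> simp <;> ring

lemma pow_tri (x : ℝ) (hx : Real.sin x ≠ 0) (k : ℕ) :
    (!![2 * Real.cos x, 1; -1, 0] : Matrix (Fin 2) (Fin 2) ℝ) ^ k =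
      !![Real.sin (((k : ℝ) + 1) * x) / Real.sin x, Real.sin ((k : ℝ) * x) / Real.sin x;
         -(Real.sin ((k : ℝ) * x) / Real.sin x), -(Real.sin (((k : ℝ) - 1) * x) / Real.sin x)] := by
  induction k with
  | zero =>
    rw [pow_zero, Matrix.one_fin_two]
    norm_num
    rw [div_self hx, neg_div, div_self hx, neg_neg]
    exact ⟨rfl, rfl⟩
  | succ k ih =>
    push_cast
    rw [pow_succ, ih, Matrix.mul_fin_two]
    have e2 : Real.sin (((k:ℝ) + 1 + 1) * x) =
        Real.sin (((k:ℝ)+1) * x) * Real.cos x + Real.cos (((k:ℝ)+1)*x) * Real.sin x := by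
      rw [← Real.sin_add]; ring_nf
    have e0 : Real.sin ((k:ℝ) * x) =
        Real.sin (((k:ℝ)+1) * x) * Real.cos x - Real.cos (((k:ℝ)+1)*x) * Real.sin x := by
      rw [← Real.sin_sub]; ring_nf
    have e1 : Real.sin (((k:ℝ) - 1) * x) =
        Real.sin ((k:ℝ) * x) * Real.cos x - Real.cos ((k:ℝ)*x) * Real.sin x := by
      rw [← Real.sin_sub]; ring_nf
    have e3 : Real.sin (((k:ℝ) + 1) * x) =
        Real.sin ((k:ℝ) * x) * Real.cos x + Real.cos ((k:ℝ)*x) * Real.sin x := by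
      rw [← Real.sin_add]; ring_nf
    ext i j
    fin_cases i <;> fin_cases j <;> simp <;> field_simp
    · linear_combination -e2 - e0 + congrArg Real.sin (mul_comm ((k:ℝ)+1+1) x)
    · linear_combination e1 + e3 + congrArg Real.sin (mul_comm x ((k:ℝ)-1)) + congrArg Real.sin (mul_comm x ((k:ℝ)+1))

lemma half_powA (x : ℝ) (hx : Real.sin x ≠ 0) (t : ℕ) (htx : (t : ℝ) * x = π / 2) :
    (!![2 * Real.cos x, 1; -1, 0] : Matrix (Fin 2) (Fin 2) ℝ) ^ t =
      !![Real.cos x / Real.sin x, 1 / Real.sin x;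
         -(1 / Real.sin x), -(Real.cos x / Real.sin x)] := by
  rw [pow_tri x hx t]
  have h1 : ((t : ℝ) + 1) * x = π / 2 + x := by rw [add_mul, htx, one_mul]
  have h2 : ((t : ℝ) - 1) * x = π / 2 - x := by rw [sub_mul, htx, one_mul]
  rw [h1, h2, htx, Real.sin_pi_div_two, Real.sin_pi_div_two_sub]
  rw [show π / 2 + x = x + π / 2 by ring, Real.sin_add_pi_div_two]

lemma half_powB (y : ℝ) (hy : Real.sin y ≠ 0) (s : ℕ)
    (hsy : (s : ℝ) * y = (s : ℝ) * π - π / 2) :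
    (!![2 * Real.cos y, 1; -1, 0] : Matrix (Fin 2) (Fin 2) ℝ) ^ s =
      !![-Real.cos ((s : ℝ) * π) * Real.cos y / Real.sin y,
         -Real.cos ((s : ℝ) * π) / Real.sin y;
         -(-Real.cos ((s : ℝ) * π) / Real.sin y),
         -(-Real.cos ((s : ℝ) * π) * Real.cos y / Real.sin y)] := by
  have hsin : Real.sin ((s : ℝ) * π) = 0 := Real.sin_nat_mul_pi s
  have hA : Real.sin ((s : ℝ) * y) = -Real.cos ((s : ℝ) * π) := by
    rw [hsy, Real.sin_sub, Real.sin_pi_div_two, Real.cos_pi_div_two, hsin]; ring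
  have hcA : Real.cos ((s : ℝ) * y) = 0 := by
    rw [hsy, Real.cos_sub, Real.sin_pi_div_two, Real.cos_pi_div_two, hsin]; ring
  have h1 : Real.sin (((s : ℝ) + 1) * y) = -Real.cos ((s : ℝ) * π) * Real.cos y := by
    rw [show ((s:ℝ)+1)*y = (s:ℝ)*y + y by ring, Real.sin_add, hA, hcA]; ring
  have h2 : Real.sin (((s : ℝ) - 1) * y) = -Real.cos ((s : ℝ) * π) * Real.cos y := by
    rw [show ((s:ℝ)-1)*y = (s:ℝ)*y - y by ring, Real.sin_sub, hA, hcA]; ring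
  rw [pow_tri y hy s, h1, h2, hA]

lemma sym_prod (x y : ℝ) (hx : Real.sin x ≠ 0) (hy : Real.sin y ≠ 0) (t s : ℕ)
    (htx : (t : ℝ) * x = π / 2) (hsy : (s : ℝ) * y = (s : ℝ) * π - π / 2) :
    (!![2 * Real.cos x, 1; -1, 0] : Matrix (Fin 2) (Fin 2) ℝ) ^ t *
      (!![2 * Real.cos y, 1; -1, 0] : Matrix (Fin 2) (Fin 2) ℝ) ^ s =
      !![-Real.cos ((s:ℝ)*π) * (Real.cos x * Real.cos y - 1) / (Real.sin x * Real.sin y),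
         -Real.cos ((s:ℝ)*π) * (Real.cos x - Real.cos y) / (Real.sin x * Real.sin y);
         -Real.cos ((s:ℝ)*π) * (Real.cos x - Real.cos y) / (Real.sin x * Real.sin y),
         -Real.cos ((s:ℝ)*π) * (Real.cos x * Real.cos y - 1) / (Real.sin x * Real.sin y)] := by
  rw [half_powA x hx t htx, half_powB y hy s hsy, Matrix.mul_fin_two]
  ext i j
  fin_cases i <;> fin_cases j <;> simp <;> field_simp <;> ring

lemma entries_mem (c1 c2 : ℝ) (F : Subfield ℝ) (hc1 : c1 ∈ F) (hc2 : c2 ∈ F)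
    (A B : Matrix.SpecialLinearGroup (Fin 2) ℝ)
    (hA : (A : Matrix (Fin 2) (Fin 2) ℝ) = !![1, 2 * c1 + 2 * c2; 0, 1])
    (hB : (B : Matrix (Fin 2) (Fin 2) ℝ) = !![2 * c1, 1; -1, 0]) :
    ∀ M ∈ Subgroup.closure ({A, B} : Set (Matrix.SpecialLinearGroup (Fin 2) ℝ)),
      ∀ i j, (M : Matrix (Fin 2) (Fin 2) ℝ) i j ∈ F := by
  have h2 : (2 : ℝ) ∈ F := by
    rw [show (2 : ℝ) = 1 + 1 by norm_num]; exact F.add_mem F.one_mem F.one_mem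
  intro M hM
  induction hM using Subgroup.closure_induction with
  | mem x hx =>
    rcases hx with h | h
    · subst h; intro i j; fin_cases i <;> fin_cases j <;> rw [hA] <;> simp <;>
        first
          | exact F.one_mem
          | exact F.zero_mem
          | exact F.add_mem (F.mul_mem h2 hc1) (F.mul_mem h2 hc2)
    · rw [Set.mem_singleton_iff] at h; subst h
      intro i j; fin_cases i <;> fin_cases j <;> rw [hB] <;> simp <;>
        first
          | exact F.one_mem
          | exact F.zero_mem
          | exact F.neg_mem F.one_mem
          | exact F.mul_mem h2 hc1
  | one =>
    intro i j; fin_cases i <;> fin_cases j <;> simp <;>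
      first | exact F.one_mem | exact F.zero_mem
  | mul x y hx hy ihx ihy =>
    intro i j
    rw [Matrix.SpecialLinearGroup.coe_mul, Matrix.mul_apply, Fin.sum_univ_two]
    exact F.add_mem (F.mul_mem (ihx i 0) (ihy 0 j)) (F.mul_mem (ihx i 1) (ihy 1 j))
  | inv x hx ihx =>
    intro i j
    rw [Matrix.SpecialLinearGroup.coe_inv, Matrix.adjugate_fin_two]
    fin_cases i <;> fin_cases j <;> simp <;>
      first
        | exact ihx 1 1 | exact ihx 0 1 | exact ihx 1 0 | exact ihx 0 0

lemma one_lt_sq_helper (a D K : ℝ) (hD : 0 < D) (hD1 : D ≤ 1) (hK : K < -1)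
    (haD : (a * D) ^ 2 = K ^ 2) : 1 < a ^ 2 := by
  by_contra hcon
  push_neg at hcon
  have hD2 : D ^ 2 ≤ 1 := by nlinarith
  have hab : a ^ 2 * D ^ 2 ≤ 1 := by nlinarith [sq_nonneg a, sq_nonneg D]
  have hK2 : 1 < K ^ 2 := by nlinarith
  have hexp : (a * D) ^ 2 = a ^ 2 * D ^ 2 := by ring
  linarith [haD, hexp]

lemma two_lt_abs_helper (T : ℝ) (h : 4 < T ^ 2) : 2 < |T| := by
  nlinarith [sq_abs T, abs_nonneg T]

lemma alpha_eq (p q r s α : ℝ) (hdet : p * s - q * r = 1) (htr : (p + s) ^ 2 = 4)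
    (hfix : p * α + q = (r * α + s) * α) (hr : r ≠ 0) :
    α = (p - s) / (2 * r) := by
  have key : (2 * r * α - (p - s)) ^ 2 = 0 := by
    linear_combination (-4 * r) * hfix + htr + (-4) * hdet
  have h0 : 2 * r * α - (p - s) = 0 := by
    have := sq_eq_zero_iff.mp key
    linarith [this]
  field_simp
  linarith

set_option maxHeartbeats 3200000 in
theorem stmt7 (m n : ℕ) (hm : 4 ≤ m) (hn : 4 ≤ n) (hmn : m ≠ n)
    (hme : Even m) (hne : Even n)
    (A B : Matrix.SpecialLinearGroup (Fin 2) ℝ)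
    (hA : (A : Matrix (Fin 2) (Fin 2) ℝ) =
      !![1, 2 * Real.cos (Real.pi / (m : ℝ)) + 2 * Real.cos (Real.pi / (n : ℝ)); 0, 1])
    (hB : (B : Matrix (Fin 2) (Fin 2) ℝ) =
      !![2 * Real.cos (Real.pi / (m : ℝ)), 1; -1, 0])
    (α : ℝ) (hα : α ≠ 0)
    (hpf : ∃ P ∈ Subgroup.closure ({A, B} : Set (Matrix.SpecialLinearGroup (Fin 2) ℝ)),
      IsParabolicMat (P : Matrix (Fin 2) (Fin 2) ℝ) ∧
        MoebiusFixes (P : Matrix (Fin 2) (Fin 2) ℝ) α) :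
    (∃ N ∈ conjSet A B α, IsParabolicMat N ∧ MoebiusFixes N 0) ∧
    (∃ N ∈ conjSet A B α, IsParabolicMat N ∧ MoebiusFixes N 1) ∧
    (∃ N ∈ conjSet A B α, IsParabolicMat N ∧ MoebiusFixesInf N) ∧
    (∃ N ∈ conjSet A B α, 2 < |Matrix.trace N| ∧
      MoebiusFixes N α⁻¹ ∧ MoebiusFixes N (-α⁻¹)) ∧
    α⁻¹ ∈ Subfield.closure ({Real.cos (Real.pi / (m : ℝ)),
      Real.cos (Real.pi / (n : ℝ))} : Set ℝ) ∧
    -α⁻¹ ∈ Subfield.closure ({Real.cos (Real.pi / (m : ℝ)),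
      Real.cos (Real.pi / (n : ℝ))} : Set ℝ) := by
  -- basic positivity facts
  have hmR : (4 : ℝ) ≤ (m : ℝ) := by exact_mod_cast hm
  have hnR : (4 : ℝ) ≤ (n : ℝ) := by exact_mod_cast hn
  have hm0 : (0 : ℝ) < (m : ℝ) := by linarith
  have hn0 : (0 : ℝ) < (n : ℝ) := by linarith
  have hπ := Real.pi_pos
  have hxm : 0 < π / (m : ℝ) := by positivity
  have hxn : 0 < π / (n : ℝ) := by positivity
  have hxm4 : π / (m : ℝ) ≤ π / 4 := by gcongr
  have hxn4 : π / (n : ℝ) ≤ π / 4 := by gcongr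
  have hsinm : 0 < Real.sin (π / (m : ℝ)) :=
    Real.sin_pos_of_pos_of_lt_pi hxm (by linarith)
  have hsinn : 0 < Real.sin (π / (n : ℝ)) :=
    Real.sin_pos_of_pos_of_lt_pi hxn (by linarith)
  have hcosm : 0 < Real.cos (π / (m : ℝ)) :=
    Real.cos_pos_of_mem_Ioo ⟨by linarith, by linarith⟩
  have hcosn : 0 < Real.cos (π / (n : ℝ)) :=
    Real.cos_pos_of_mem_Ioo ⟨by linarith, by linarith⟩
  have hcosm1 : Real.cos (π / (m : ℝ)) ≤ 1 := Real.cos_le_one _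
  have hcosn1 : Real.cos (π / (n : ℝ)) ≤ 1 := Real.cos_le_one _
  have hsinm1 : Real.sin (π / (m : ℝ)) ≤ 1 := Real.sin_le_one _
  have hsinn1 : Real.sin (π / (n : ℝ)) ≤ 1 := Real.sin_le_one _
  have hlpos : 0 < 2 * Real.cos (π / (m : ℝ)) + 2 * Real.cos (π / (n : ℝ)) := by linarith
  have hAmem : A ∈ Subgroup.closure ({A, B} : Set (Matrix.SpecialLinearGroup (Fin 2) ℝ)) :=
    Subgroup.subset_closure (Set.mem_insert _ _)
  have hBmem : B ∈ Subgroup.closure ({A, B} : Set (Matrix.SpecialLinearGroup (Fin 2) ℝ)) :=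
    Subgroup.subset_closure (Set.mem_insert_of_mem _ rfl)
  have hαinv : α⁻¹ ≠ 0 := inv_ne_zero hα
  obtain ⟨P, hPmem, hPpar, hPfix⟩ := hpf
  -- entries of P
  have hPdet : (P : Matrix (Fin 2) (Fin 2) ℝ) 0 0 * (P : Matrix (Fin 2) (Fin 2) ℝ) 1 1 -
      (P : Matrix (Fin 2) (Fin 2) ℝ) 0 1 * (P : Matrix (Fin 2) (Fin 2) ℝ) 1 0 = 1 := by
    rw [← Matrix.det_fin_two]; exact P.prop
  have hPtr2 : ((P : Matrix (Fin 2) (Fin 2) ℝ) 0 0 + (P : Matrix (Fin 2) (Fin 2) ℝ) 1 1) ^ 2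
      = 4 := by
    have h := hPpar.2.2
    rw [Matrix.trace_fin_two] at h
    have := sq_abs ((P : Matrix (Fin 2) (Fin 2) ℝ) 0 0 + (P : Matrix (Fin 2) (Fin 2) ℝ) 1 1)
    rw [h] at this
    nlinarith [this]
  have hfixP : (P : Matrix (Fin 2) (Fin 2) ℝ) 0 0 * α + (P : Matrix (Fin 2) (Fin 2) ℝ) 0 1 =
      ((P : Matrix (Fin 2) (Fin 2) ℝ) 1 0 * α + (P : Matrix (Fin 2) (Fin 2) ℝ) 1 1) * α := hPfix
  have hnegone : (-1 : Matrix (Fin 2) (Fin 2) ℝ) = !![-1, 0; 0, -1] := by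
    ext i j; fin_cases i <;> fin_cases j <;> simp
  -- α lies in the subfield
  have hαF : α ∈ Subfield.closure ({Real.cos (Real.pi / (m : ℝ)),
      Real.cos (Real.pi / (n : ℝ))} : Set ℝ) := by
    set F := Subfield.closure ({Real.cos (Real.pi / (m : ℝ)),
      Real.cos (Real.pi / (n : ℝ))} : Set ℝ) with hFdef
    have hc1F : Real.cos (Real.pi / (m : ℝ)) ∈ F :=
      Subfield.subset_closure (Set.mem_insert _ _)
    have hc2F : Real.cos (Real.pi / (n : ℝ)) ∈ F :=
      Subfield.subset_closure (Set.mem_insert_of_mem _ rfl)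
    have hent := entries_mem _ _ F hc1F hc2F A B hA hB P hPmem
    by_cases hr : (P : Matrix (Fin 2) (Fin 2) ℝ) 1 0 = 0
    · exfalso
      rw [hr] at hPdet hfixP
      have hps : (P : Matrix (Fin 2) (Fin 2) ℝ) 0 0 = (P : Matrix (Fin 2) (Fin 2) ℝ) 1 1 := by
        nlinarith [hPdet, hPtr2]
      have hq : (P : Matrix (Fin 2) (Fin 2) ℝ) 0 1 = 0 := by
        rw [hps] at hfixP; nlinarith [hfixP]
      have hp2 : ((P : Matrix (Fin 2) (Fin 2) ℝ) 0 0 - 1) *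
          ((P : Matrix (Fin 2) (Fin 2) ℝ) 0 0 + 1) = 0 := by nlinarith [hPdet, hps]
      rcases mul_eq_zero.mp hp2 with h | h
      · exact hPpar.1 (by
          rw [Matrix.eta_fin_two (P : Matrix (Fin 2) (Fin 2) ℝ), hq, hr,
            show (P : Matrix (Fin 2) (Fin 2) ℝ) 0 0 = 1 by linarith,
            ← hps, show (P : Matrix (Fin 2) (Fin 2) ℝ) 0 0 = 1 by linarith,
            Matrix.one_fin_two])
      · exact hPpar.2.1 (by
          rw [Matrix.eta_fin_two (P : Matrix (Fin 2) (Fin 2) ℝ), hq, hr,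
            show (P : Matrix (Fin 2) (Fin 2) ℝ) 0 0 = -1 by linarith,
            ← hps, show (P : Matrix (Fin 2) (Fin 2) ℝ) 0 0 = -1 by linarith, hnegone])
    · have hαeq := alpha_eq _ _ _ _ α hPdet hPtr2 hfixP hr
      rw [hαeq]
      exact F.div_mem (F.sub_mem (hent 0 0) (hent 1 1))
        (F.mul_mem (by
          rw [show (2 : ℝ) = 1 + 1 by norm_num]; exact F.add_mem F.one_mem F.one_mem)
          (hent 1 0))
  refine ⟨?_, ?_, ?_, ?_, Subfield.inv_mem _ hαF, Subfield.neg_mem _ (Subfield.inv_mem _ hαF)⟩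
  · -- parabolic fixing 0
    have hBAB : ((B⁻¹ * A * B : Matrix.SpecialLinearGroup (Fin 2) ℝ) :
        Matrix (Fin 2) (Fin 2) ℝ) =
        !![1, 0; -(2 * Real.cos (Real.pi / (m : ℝ)) + 2 * Real.cos (Real.pi / (n : ℝ))), 1] := by
      rw [Matrix.SpecialLinearGroup.coe_mul, Matrix.SpecialLinearGroup.coe_mul,
        Matrix.SpecialLinearGroup.coe_inv, hA, hB, Matrix.adjugate_fin_two]
      ext i j
      fin_cases i <;> fin_cases j <;>
        simp [Matrix.mul_apply, Fin.sum_univ_two] <;> ring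
    have hNmat : !![(1 : ℝ), 0; 0, α] *
        ((B⁻¹ * A * B : Matrix.SpecialLinearGroup (Fin 2) ℝ) : Matrix (Fin 2) (Fin 2) ℝ) *
        !![(1 : ℝ), 0; 0, α⁻¹] =
        !![1, 0;
          α * -(2 * Real.cos (Real.pi / (m : ℝ)) + 2 * Real.cos (Real.pi / (n : ℝ))), 1] := by
      rw [hBAB, conj_mat]
      ext i j
      fin_cases i <;> fin_cases j <;> norm_num [mul_inv_cancel₀ hα]
    refine ⟨_, ⟨B⁻¹ * A * B, mul_mem (mul_mem (inv_mem hBmem) hAmem) hBmem, rfl⟩, ?_, ?_⟩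
    · rw [hNmat]
      refine ⟨?_, ?_, ?_⟩
      · intro h
        rw [Matrix.one_fin_two] at h
        have h10 := congrFun (congrFun h 1) 0
        simp at h10
        rcases h10 with h' | h'
        · exact hα h'
        · linarith
      · intro h
        rw [hnegone] at h
        have h00 := congrFun (congrFun h 0) 0
        simp at h00
        norm_num at h00
      · rw [Matrix.trace_fin_two]
        norm_num
    · show MoebiusFixes _ 0
      rw [hNmat]
      unfold MoebiusFixes
      norm_num
  · -- parabolic fixing 1
    have hs11 : α * (P : Matrix (Fin 2) (Fin 2) ℝ) 1 1 * α⁻¹ =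
        (P : Matrix (Fin 2) (Fin 2) ℝ) 1 1 := by field_simp
    have hNP : !![(1 : ℝ), 0; 0, α] * ((P : Matrix (Fin 2) (Fin 2) ℝ)) *
        !![(1 : ℝ), 0; 0, α⁻¹] =
        !![(P : Matrix (Fin 2) (Fin 2) ℝ) 0 0, (P : Matrix (Fin 2) (Fin 2) ℝ) 0 1 * α⁻¹;
           α * (P : Matrix (Fin 2) (Fin 2) ℝ) 1 0, (P : Matrix (Fin 2) (Fin 2) ℝ) 1 1] := by
      rw [conj_mat, hs11]
    refine ⟨_, ⟨P, hPmem, rfl⟩, ?_, ?_⟩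
    · rw [hNP]
      refine ⟨?_, ?_, ?_⟩
      · intro h
        apply hPpar.1
        rw [Matrix.one_fin_two] at h
        have h00 := congrFun (congrFun h 0) 0
        have h01 := congrFun (congrFun h 0) 1
        have h10 := congrFun (congrFun h 1) 0
        have h11 := congrFun (congrFun h 1) 1
        simp at h00 h01 h10 h11
        have e01 : (P : Matrix (Fin 2) (Fin 2) ℝ) 0 1 = 0 := by
          rcases h01 with h' | h'
          · exact h'
          · exact absurd h' hα
        have e10 : (P : Matrix (Fin 2) (Fin 2) ℝ) 1 0 = 0 := by
          rcases h10 with h' | h'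
          · exact absurd h' hα
          · exact h'
        rw [Matrix.eta_fin_two (P : Matrix (Fin 2) (Fin 2) ℝ), h00, e01, e10, h11,
          Matrix.one_fin_two]
      · intro h
        apply hPpar.2.1
        rw [hnegone] at h
        have h00 := congrFun (congrFun h 0) 0
        have h01 := congrFun (congrFun h 0) 1
        have h10 := congrFun (congrFun h 1) 0
        have h11 := congrFun (congrFun h 1) 1
        simp at h00 h01 h10 h11
        have e01 : (P : Matrix (Fin 2) (Fin 2) ℝ) 0 1 = 0 := by
          rcases h01 with h' | h'
          · exact h'
          · exact absurd h' hα
        have e10 : (P : Matrix (Fin 2) (Fin 2) ℝ) 1 0 = 0 := by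
          rcases h10 with h' | h'
          · exact absurd h' hα
          · exact h'
        rw [Matrix.eta_fin_two (P : Matrix (Fin 2) (Fin 2) ℝ), h00, e01, e10, h11, hnegone]
      · rw [Matrix.trace_fin_two]
        have hval : (!![(P : Matrix (Fin 2) (Fin 2) ℝ) 0 0,
            (P : Matrix (Fin 2) (Fin 2) ℝ) 0 1 * α⁻¹;
            α * (P : Matrix (Fin 2) (Fin 2) ℝ) 1 0,
            (P : Matrix (Fin 2) (Fin 2) ℝ) 1 1] : Matrix (Fin 2) (Fin 2) ℝ) 0 0 +
            !![(P : Matrix (Fin 2) (Fin 2) ℝ) 0 0,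
            (P : Matrix (Fin 2) (Fin 2) ℝ) 0 1 * α⁻¹;
            α * (P : Matrix (Fin 2) (Fin 2) ℝ) 1 0,
            (P : Matrix (Fin 2) (Fin 2) ℝ) 1 1] 1 1 =
            (P : Matrix (Fin 2) (Fin 2) ℝ) 0 0 + (P : Matrix (Fin 2) (Fin 2) ℝ) 1 1 := by
          norm_num
        rw [hval]
        have h := hPpar.2.2
        rw [Matrix.trace_fin_two] at h
        exact h
    · show MoebiusFixes _ 1
      rw [hNP]
      unfold MoebiusFixes
      simp only [Matrix.of_apply, Matrix.cons_val', Matrix.cons_val_zero, Matrix.cons_val_one, Matrix.head_cons, Matrix.empty_val', Matrix.cons_val_fin_one]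
      field_simp
      linear_combination hfixP
  · -- parabolic fixing ∞
    have hNA : !![(1 : ℝ), 0; 0, α] * ((A : Matrix (Fin 2) (Fin 2) ℝ)) *
        !![(1 : ℝ), 0; 0, α⁻¹] =
        !![1, (2 * Real.cos (Real.pi / (m : ℝ)) + 2 * Real.cos (Real.pi / (n : ℝ))) * α⁻¹;
           0, 1] := by
      rw [hA, conj_mat]
      ext i j
      fin_cases i <;> fin_cases j <;> norm_num [mul_inv_cancel₀ hα]
    refine ⟨_, ⟨A, hAmem, rfl⟩, ?_, ?_⟩
    · rw [hNA]
      refine ⟨?_, ?_, ?_⟩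
      · intro h
        rw [Matrix.one_fin_two] at h
        have h01 := congrFun (congrFun h 0) 1
        simp at h01
        rcases h01 with h' | h'
        · linarith
        · exact hα h'
      · intro h
        rw [hnegone] at h
        have h00 := congrFun (congrFun h 0) 0
        simp at h00
        norm_num at h00
      · rw [Matrix.trace_fin_two]
        norm_num
    · show MoebiusFixesInf _
      rw [hNA]
      unfold MoebiusFixesInf
      norm_num
  · -- hyperbolic element
    obtain ⟨t, ht⟩ := hme
    obtain ⟨u, hu⟩ := hne
    have htR : (m : ℝ) = (t : ℝ) + (t : ℝ) := by rw [ht]; push_cast; ring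
    have huR : (n : ℝ) = (u : ℝ) + (u : ℝ) := by rw [hu]; push_cast; ring
    have ht0 : (0 : ℝ) < (t : ℝ) := by linarith
    have hu0 : (0 : ℝ) < (u : ℝ) := by linarith
    have htx : (t : ℝ) * (π / (m : ℝ)) = π / 2 := by
      rw [htR]; field_simp; ring
    have huy : (u : ℝ) * (π - π / (n : ℝ)) = (u : ℝ) * π - π / 2 := by
      rw [huR]; field_simp; ring
    have hsy : Real.sin (π - π / (n : ℝ)) ≠ 0 := by
      rw [Real.sin_pi_sub]; exact ne_of_gt hsinn
    have hAB : ((A * B : Matrix.SpecialLinearGroup (Fin 2) ℝ) : Matrix (Fin 2) (Fin 2) ℝ) =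
        !![2 * Real.cos (π - π / (n : ℝ)), 1; -1, 0] := by
      rw [Matrix.SpecialLinearGroup.coe_mul, hA, hB, Matrix.mul_fin_two]
      ext i j
      fin_cases i <;> fin_cases j <;> simp [Real.cos_pi_sub] <;> ring
    set a : ℝ := -Real.cos ((u:ℝ)*π) * (Real.cos (π / (m:ℝ)) * Real.cos (π - π / (n:ℝ)) - 1) /
        (Real.sin (π / (m:ℝ)) * Real.sin (π - π / (n:ℝ))) with hadef
    set c : ℝ := -Real.cos ((u:ℝ)*π) * (Real.cos (π / (m:ℝ)) - Real.cos (π - π / (n:ℝ))) /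
        (Real.sin (π / (m:ℝ)) * Real.sin (π - π / (n:ℝ))) with hcdef
    have hM : ((B ^ t * (A * B) ^ u : Matrix.SpecialLinearGroup (Fin 2) ℝ) :
        Matrix (Fin 2) (Fin 2) ℝ) = !![a, c; c, a] := by
      rw [Matrix.SpecialLinearGroup.coe_mul, Matrix.SpecialLinearGroup.coe_pow,
        Matrix.SpecialLinearGroup.coe_pow, hB, hAB]
      exact sym_prod _ _ (ne_of_gt hsinm) hsy t u htx huy
    have hNM : !![(1 : ℝ), 0; 0, α] *
        ((B ^ t * (A * B) ^ u : Matrix.SpecialLinearGroup (Fin 2) ℝ) :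
          Matrix (Fin 2) (Fin 2) ℝ) * !![(1 : ℝ), 0; 0, α⁻¹] =
        !![a, c * α⁻¹; α * c, a] := by
      rw [hM, conj_mat]
      ext i j
      fin_cases i <;> fin_cases j <;> norm_num
      field_simp
    refine ⟨_, ⟨B ^ t * (A * B) ^ u,
      mul_mem (pow_mem hBmem t) (pow_mem (mul_mem hAmem hBmem) u), rfl⟩, ?_, ?_, ?_⟩
    · rw [hNM, Matrix.trace_fin_two]
      have hval : (!![a, c * α⁻¹; α * c, a] : Matrix (Fin 2) (Fin 2) ℝ) 0 0 +
          !![a, c * α⁻¹; α * c, a] 1 1 = a + a := by norm_num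
      rw [hval]
      have hesq : Real.cos ((u:ℝ)*π) ^ 2 = 1 := by
        have h1 := Real.sin_sq_add_cos_sq ((u:ℝ)*π)
        rw [Real.sin_nat_mul_pi u] at h1
        nlinarith [h1]
      have hD : 0 < Real.sin (π / (m:ℝ)) * Real.sin (π - π / (n:ℝ)) := by
        rw [Real.sin_pi_sub]; positivity
      have hD1 : Real.sin (π / (m:ℝ)) * Real.sin (π - π / (n:ℝ)) ≤ 1 := by
        rw [Real.sin_pi_sub]; nlinarith [hsinm, hsinn, hsinm1, hsinn1]
      have hK : Real.cos (π / (m:ℝ)) * Real.cos (π - π / (n:ℝ)) - 1 < -1 := by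
        rw [Real.cos_pi_sub]; nlinarith [hcosm, hcosn]
      have haD : (a * (Real.sin (π / (m:ℝ)) * Real.sin (π - π / (n:ℝ)))) ^ 2 =
          (Real.cos (π / (m:ℝ)) * Real.cos (π - π / (n:ℝ)) - 1) ^ 2 := by
        rw [hadef, div_mul_cancel₀ _ (ne_of_gt hD)]
        linear_combination (Real.cos (π / (m:ℝ)) * Real.cos (π - π / (n:ℝ)) - 1) ^ 2 * hesq
      have ha2 : 1 < a ^ 2 := one_lt_sq_helper _ _ _ hD hD1 hK haD
      have h4 : 4 < (a + a) ^ 2 := by nlinarith [ha2]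
      exact two_lt_abs_helper _ h4
    · show MoebiusFixes _ α⁻¹
      rw [hNM]
      unfold MoebiusFixes
      simp only [Matrix.of_apply, Matrix.cons_val', Matrix.cons_val_zero, Matrix.cons_val_one, Matrix.head_cons, Matrix.empty_val', Matrix.cons_val_fin_one]
      field_simp
      ring
    · show MoebiusFixes _ (-α⁻¹)
      rw [hNM]
      unfold MoebiusFixes
      simp only [Matrix.of_apply, Matrix.cons_val', Matrix.cons_val_zero, Matrix.cons_val_one, Matrix.head_cons, Matrix.empty_val', Matrix.cons_val_fin_one]
      field_simp
      ring
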